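/- Let π : C → D be a surjective morphism of k-coalgebras, and regard C as a right D-comodule via ρ = (id ⊗ π) ∘ Δ_C. Assume C is injective as a right D-comodule, in the sense that there exists a homomorphism of right D-comodules r : C ⊗ D → C (C ⊗ D the cofree right D-comodule, with coaction id ⊗ Δ_D) such that r ∘ ρ = id_C. Let (B, θ_B) be a left C-contramodule which is a retract of a free C-contramodule: there exist a k-vector space V and C-contramodule homomorphisms s : B → Hom_k(C,V) and p : Hom_k(C,V) → B with p ∘ s = id_B. Then B, equipped with the restricted D-contra-action θ_res(φ) = θ_B(φ ∘ π), is a retract of a free D-contramodule: there exist a k-vector space W and D-contramodule homomorphisms s' : B → Hom_k(D,W) and p' : Hom_k(D,W) → B with p' ∘ s' = id_B. -/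

import Mathlib

/-!
STATEMENT 15: Let π : C → D be a surjective coalgebra morphism such that C is injective as a
right D-comodule (the coaction ρ = (id ⊗ π) ∘ Δ_C splits by a D-comodule map r : C ⊗ D → C).
If a left C-contramodule (B, θ_B) is a retract of a free C-contramodule, then B with the
restricted D-contra-action θ_res(φ) = θ_B(φ ∘ π) is a retract of a free D-contramodule.
(Restriction along an exact subgroup preserves projectivity.)
-/

open TensorProduct LinearMap

noncomputable section

universe u₁ u₂ u₃ u₄ u₅

variable (k : Type u₁) [Field k]
variable (C : Type u₂) [AddCommGroup C] [Module k C] [Coalgebra k C]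
variable (D : Type u₃) [AddCommGroup D] [Module k D] [Coalgebra k D]

def IsContramodule (A : Type*) [AddCommGroup A] [Module k A] [Coalgebra k A]
    {B' : Type*} [AddCommGroup B'] [Module k B']
    (θ : (A →ₗ[k] B') →ₗ[k] B') : Prop :=
  (∀ Φ : A →ₗ[k] (A →ₗ[k] B'),
      θ (θ ∘ₗ Φ) = θ ((TensorProduct.lift Φ.flip) ∘ₗ Coalgebra.comul)) ∧
  (∀ b : B', θ ((LinearMap.toSpanSingleton k B' b) ∘ₗ Coalgebra.counit) = b)

def IsContraHom (A : Type*) [AddCommGroup A] [Module k A] [Coalgebra k A]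
    {B' D' : Type*} [AddCommGroup B'] [Module k B'] [AddCommGroup D'] [Module k D']
    (θB : (A →ₗ[k] B') →ₗ[k] B') (θD : (A →ₗ[k] D') →ₗ[k] D')
    (f : B' →ₗ[k] D') : Prop :=
  ∀ φ : A →ₗ[k] B', f (θB φ) = θD (f ∘ₗ φ)

/-- The free contra-action on `Hom_k(A,V)`. -/
def freeContra (A : Type*) [AddCommGroup A] [Module k A] [Coalgebra k A]
    (V : Type*) [AddCommGroup V] [Module k V] :
    (A →ₗ[k] (A →ₗ[k] V)) →ₗ[k] (A →ₗ[k] V) :=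
  (LinearMap.lcomp k V (Coalgebra.comul (R := k) (A := A))) ∘ₗ
    (TensorProduct.uncurry (RingHom.id k) A A V) ∘ₗ (LinearMap.lflip (R₀ := k)).toLinearMap

/-- The right `D`-comodule structure `ρ = (id ⊗ π) ∘ Δ_C` on `C`. -/
def resCoaction (π : C →ₗ[k] D) : C →ₗ[k] C ⊗[k] D :=
  (TensorProduct.map LinearMap.id π) ∘ₗ (Coalgebra.comul (R := k) (A := C))

/-- The coaction of the cofree right `D`-comodule `C ⊗ D`. -/
def cofreeCoaction : (C ⊗[k] D) →ₗ[k] (C ⊗[k] D) ⊗[k] D :=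
  (TensorProduct.assoc k C D D).symm.toLinearMap ∘ₗ
    (TensorProduct.map LinearMap.id Coalgebra.comul)

theorem restriction_preserves_retract_of_free
    -- `π : C → D` is a surjective morphism of coalgebras:
    (π : C →ₗ[k] D)
    (hπcomul : Coalgebra.comul ∘ₗ π = (TensorProduct.map π π) ∘ₗ Coalgebra.comul)
    (hπcounit : Coalgebra.counit ∘ₗ π = (Coalgebra.counit (R := k) (A := C)))
    (hπsurj : Function.Surjective π)
    -- `C` is injective as a right `D`-comodule:
    (r : C ⊗[k] D →ₗ[k] C)
    (hr_hom : (resCoaction k C D π) ∘ₗ r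
        = (TensorProduct.map r LinearMap.id) ∘ₗ cofreeCoaction k C D)
    (hr_split : r ∘ₗ (resCoaction k C D π) = LinearMap.id)
    -- `(B, θ_B)` is a left `C`-contramodule which is a retract of a free `C`-contramodule:
    (B : Type u₄) [AddCommGroup B] [Module k B]
    (θB : (C →ₗ[k] B) →ₗ[k] B) (hB : IsContramodule k C θB)
    (V : Type u₅) [AddCommGroup V] [Module k V]
    (s : B →ₗ[k] (C →ₗ[k] V)) (p : (C →ₗ[k] V) →ₗ[k] B)
    (hs : IsContraHom k C θB (freeContra k C V) s)
    (hp : IsContraHom k C (freeContra k C V) θB p)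
    (hps : p ∘ₗ s = LinearMap.id) :
    -- then `(B, θ_res)` is a retract of a free `D`-contramodule:
    ∃ (W : Type (max u₂ u₅)) (_ : AddCommGroup W) (_ : Module k W)
      (s' : B →ₗ[k] (D →ₗ[k] W)) (p' : (D →ₗ[k] W) →ₗ[k] B),
      IsContraHom k D (θB ∘ₗ (LinearMap.lcomp k B π)) (freeContra k D W) s' ∧
      IsContraHom k D (freeContra k D W) (θB ∘ₗ (LinearMap.lcomp k B π)) p' ∧
      p' ∘ₗ s' = LinearMap.id := by
  classical
  -- the underlying space of the free D-contramodule
  refine ⟨C →ₗ[k] V, inferInstance, inferInstance, ?_⟩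
  -- the two structural maps
  set W : Type (max u₂ u₅) := C →ₗ[k] V with hW
  let Λ : (C →ₗ[k] V) →ₗ[k] (D →ₗ[k] (C →ₗ[k] V)) :=
    (LinearMap.lflip (R₀ := k)).toLinearMap ∘ₗ (TensorProduct.lcurry (RingHom.id k) C D V) ∘ₗ (LinearMap.lcomp k V r)
  let μ : (D →ₗ[k] (C →ₗ[k] V)) →ₗ[k] (C →ₗ[k] V) :=
    (LinearMap.lcomp k V (resCoaction k C D π)) ∘ₗ (TensorProduct.uncurry (RingHom.id k) C D V) ∘ₗ
      (LinearMap.lflip (R₀ := k)).toLinearMap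
  have hΛ_apply : ∀ (g : C →ₗ[k] V) (d : D) (c : C), Λ g d c = g (r (c ⊗ₜ[k] d)) := by
    intro g d c; simp [Λ]
  have hμ_apply : ∀ (h : D →ₗ[k] (C →ₗ[k] V)) (c : C),
      μ h c = TensorProduct.uncurry (RingHom.id k) C D V h.flip (resCoaction k C D π c) := by
    intro h c; rfl
  have hfreeC : ∀ (Φ : C →ₗ[k] (C →ₗ[k] V)) (a : C),
      freeContra k C V Φ a = TensorProduct.uncurry (RingHom.id k) C C V Φ.flip (Coalgebra.comul a) := by
    intro Φ a; rfl
  have hfreeD : ∀ (Φ : D →ₗ[k] (D →ₗ[k] (C →ₗ[k] V))) (a : D),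
      freeContra k D (C →ₗ[k] V) Φ a
        = TensorProduct.uncurry (RingHom.id k) D D (C →ₗ[k] V) Φ.flip (Coalgebra.comul a) := by
    intro Φ a; rfl
  -- (3) μ ∘ Λ = id
  have h3 : ∀ g : C →ₗ[k] V, μ (Λ g) = g := by
    intro g
    have h1 : (TensorProduct.uncurry (RingHom.id k) C D V) (Λ g).flip = g ∘ₗ r := by
      apply TensorProduct.ext'
      intro x y
      simp [Λ]
    ext c
    rw [hμ_apply, h1, LinearMap.comp_apply, ← LinearMap.comp_apply r, hr_split,
      LinearMap.id_apply]
  -- (1) Λ is a D-contramodule homomorphism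
  have hΛhom : ∀ Ψ : D →ₗ[k] (C →ₗ[k] V),
      Λ (freeContra k C V (Ψ ∘ₗ π)) = freeContra k D (C →ₗ[k] V) (Λ ∘ₗ Ψ) := by
    intro Ψ
    ext d c
    rw [hΛ_apply, hfreeC]
    conv_rhs => rw [hfreeD]
    have e1 : TensorProduct.uncurry (RingHom.id k) C C V (Ψ ∘ₗ π).flip =
        (TensorProduct.uncurry (RingHom.id k) C D V Ψ.flip) ∘ₗ (TensorProduct.map LinearMap.id π) := by
      apply TensorProduct.ext'
      intro x y
      simp
    rw [e1, LinearMap.comp_apply]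
    have e2 : (TensorProduct.map LinearMap.id π) (Coalgebra.comul (r (c ⊗ₜ[k] d)))
        = resCoaction k C D π (r (c ⊗ₜ[k] d)) := rfl
    have e6 := LinearMap.congr_fun hr_hom (c ⊗ₜ[k] d)
    simp only [LinearMap.comp_apply] at e6
    rw [e2, e6]
    have e3 : cofreeCoaction k C D (c ⊗ₜ[k] d)
        = (TensorProduct.assoc k C D D).symm (c ⊗ₜ[k] Coalgebra.comul d) := by
      simp [cofreeCoaction]
    rw [e3]
    have key : ∀ t : D ⊗[k] D,
        TensorProduct.uncurry (RingHom.id k) C D V Ψ.flip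
          ((TensorProduct.map r LinearMap.id) ((TensorProduct.assoc k C D D).symm (c ⊗ₜ[k] t)))
        = (TensorProduct.uncurry (RingHom.id k) D D (C →ₗ[k] V) (Λ ∘ₗ Ψ).flip t) c := by
      intro t
      induction t using TensorProduct.induction_on with
      | zero => simp
      | tmul d₁ d₂ => simp [hΛ_apply]
      | add u v hu hv => simp [TensorProduct.tmul_add, map_add, hu, hv]
    exact key (Coalgebra.comul d)
  -- (2) μ is a D-contramodule homomorphism
  have hμhom : ∀ Φ : D →ₗ[k] (D →ₗ[k] (C →ₗ[k] V)),
      μ (freeContra k D (C →ₗ[k] V) Φ) = freeContra k C V ((μ ∘ₗ Φ) ∘ₗ π) := by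
    intro Φ
    let Q : C ⊗[k] C →ₗ[k] (C →ₗ[k] V) :=
      (TensorProduct.uncurry (RingHom.id k) D D (C →ₗ[k] V) Φ.flip) ∘ₗ (TensorProduct.map π π)
    let P : C ⊗[k] (C ⊗[k] C) →ₗ[k] V := TensorProduct.uncurry (RingHom.id k) C (C ⊗[k] C) V Q.flip
    have hP : ∀ (c₁ : C) (u : C ⊗[k] C), P (c₁ ⊗ₜ[k] u) = Q u c₁ := by
      intro c₁ u; simp [P]
    have H : ∀ t : C ⊗[k] C,
        TensorProduct.uncurry (RingHom.id k) C D V (freeContra k D (C →ₗ[k] V) Φ).flip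
            ((TensorProduct.map LinearMap.id π) t)
          = P ((LinearMap.lTensor C Coalgebra.comul) t) := by
      intro t
      induction t using TensorProduct.induction_on with
      | zero => simp
      | tmul c₁ c₂ =>
          rw [TensorProduct.map_tmul, TensorProduct.uncurry_apply, LinearMap.flip_apply,
            LinearMap.id_apply, hfreeD, LinearMap.lTensor_tmul, hP]
          have := LinearMap.congr_fun hπcomul c₂
          simp only [LinearMap.comp_apply] at this
          rw [this]
          simp [Q]
      | add u v hu hv => simp [map_add, hu, hv]
    have H' : ∀ t : C ⊗[k] C,
        TensorProduct.uncurry (RingHom.id k) C C V ((μ ∘ₗ Φ) ∘ₗ π).flip t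
          = P ((TensorProduct.assoc k C C C) ((LinearMap.rTensor C Coalgebra.comul) t)) := by
      intro t
      induction t using TensorProduct.induction_on with
      | zero => simp
      | tmul a y =>
          rw [TensorProduct.uncurry_apply, LinearMap.flip_apply, LinearMap.comp_apply,
            LinearMap.comp_apply, hμ_apply, LinearMap.rTensor_tmul]
          have inner : ∀ u : C ⊗[k] C,
              TensorProduct.uncurry (RingHom.id k) C D V (Φ (π y)).flip ((TensorProduct.map LinearMap.id π) u)
                = P ((TensorProduct.assoc k C C C) (u ⊗ₜ[k] y)) := by
            intro u
            induction u using TensorProduct.induction_on with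
            | zero => simp
            | tmul a' b => simp [hP, Q]
            | add u v hu hv => simp [TensorProduct.add_tmul, map_add, hu, hv]
          have e4 : resCoaction k C D π a
              = (TensorProduct.map LinearMap.id π) (Coalgebra.comul a) := rfl
          rw [e4, inner (Coalgebra.comul a)]
      | add u v hu hv => simp [map_add, hu, hv]
    ext c
    rw [hμ_apply]
    conv_rhs => rw [hfreeC]
    have e5 : resCoaction k C D π c
        = (TensorProduct.map LinearMap.id π) (Coalgebra.comul c) := rfl
    rw [e5, H, ← Coalgebra.coassoc_apply, ← H']
  -- assemble
  refine ⟨Λ ∘ₗ s, p ∘ₗ μ, ?_, ?_, ?_⟩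
  · intro φ
    have : (θB ∘ₗ LinearMap.lcomp k B π) φ = θB (φ ∘ₗ π) := rfl
    rw [this, LinearMap.comp_apply, hs (φ ∘ₗ π)]
    have : s ∘ₗ (φ ∘ₗ π) = (s ∘ₗ φ) ∘ₗ π := by rw [LinearMap.comp_assoc]
    rw [this, hΛhom (s ∘ₗ φ), ← LinearMap.comp_assoc]
  · intro φ
    rw [LinearMap.comp_apply, hμhom φ, hp]
    have : p ∘ₗ ((μ ∘ₗ φ) ∘ₗ π) = (((p ∘ₗ μ) ∘ₗ φ) ∘ₗ π) := by
      simp [LinearMap.comp_assoc]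
    rw [this]
    rfl
  · ext b
    simp only [LinearMap.comp_apply, LinearMap.id_apply]
    rw [h3 (s b), ← LinearMap.comp_apply p s, hps, LinearMap.id_apply]

end
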